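/- Let n ≥ 1 and s, t ∈ ℝ. For every ε > 0 there exists x₀ > 0 such that for every C¹ function u : ℝⁿ → ℝ with compact support contained in the slab {x ∈ ℝⁿ : 0 < xₙ < x₀}, one has ∫ e^{−2s/xₙ} xₙ^{2t} |∇u|² dx ≥ (s² − ε) ∫ e^{−2s/xₙ} xₙ^{2t−4} u² dx. -/

import Mathlib

open MeasureTheory Real

/-- The `i`-th partial derivative of a function on `ℝⁿ`. -/
noncomputable def pd (n : ℕ) (f : EuclideanSpace ℝ (Fin n) → ℝ)
    (i : Fin n) (x : EuclideanSpace ℝ (Fin n)) : ℝ :=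
  fderiv ℝ f x (EuclideanSpace.single i 1)

/-- The squared Euclidean norm of the gradient, `|∇f|² = Σᵢ (∂ᵢf)²`. -/
noncomputable def gradSq (n : ℕ) (f : EuclideanSpace ℝ (Fin n) → ℝ)
    (x : EuclideanSpace ℝ (Fin n)) : ℝ :=
  ∑ i, (pd n f i x) ^ 2

/-- The Euclidean Laplacian, `Δf = Σᵢ ∂ᵢ²f`. -/
noncomputable def lap (n : ℕ) (f : EuclideanSpace ℝ (Fin n) → ℝ)
    (x : EuclideanSpace ℝ (Fin n)) : ℝ :=
  ∑ i, pd n (pd n f i) i x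

set_option maxHeartbeats 2000000 in
/-- Flat-case exponentially weighted Poincaré inequality near a boundary:
for every `ε > 0` there is `x₀ > 0` such that for all `C¹` functions `u`
compactly supported in the slab `{0 < xₙ < x₀}`,
`∫ e^{−2s/xₙ} xₙ^{2t} |∇u|² ≥ (s² − ε) ∫ e^{−2s/xₙ} xₙ^{2t−4} u²`. -/
theorem weighted_poincare_exp_halfspace (n : ℕ) (hn : 1 ≤ n) (s t : ℝ) :
    ∀ ε > (0:ℝ), ∃ x₀ > (0:ℝ),
      ∀ u : EuclideanSpace ℝ (Fin n) → ℝ,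
        ContDiff ℝ 1 u → HasCompactSupport u →
        tsupport u ⊆ {x : EuclideanSpace ℝ (Fin n) |
            0 < x ⟨n - 1, by omega⟩ ∧ x ⟨n - 1, by omega⟩ < x₀} →
        ∫ x : EuclideanSpace ℝ (Fin n),
            Real.exp (-2 * s / x (⟨n - 1, by omega⟩ : Fin n)) *
              (x (⟨n - 1, by omega⟩ : Fin n)) ^ (2 * t) * gradSq n u x ≥
          (s ^ 2 - ε) *
            ∫ x : EuclideanSpace ℝ (Fin n),
              Real.exp (-2 * s / x (⟨n - 1, by omega⟩ : Fin n)) *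
                (x (⟨n - 1, by omega⟩ : Fin n)) ^ (2 * t - 4) * (u x) ^ 2 := by
  intro ε hε
  set c : ℝ := |s * (2*t - 2)| with hc
  have hc0 : 0 ≤ c := abs_nonneg _
  refine ⟨ε / (c + 1), by positivity, ?_⟩
  intro u hu hcs hsupp
  set k : Fin n := ⟨n - 1, by omega⟩ with hk
  -- the coordinate map
  have hprojc : Continuous fun x : EuclideanSpace ℝ (Fin n) => x k := (EuclideanSpace.proj (𝕜 := ℝ) k).continuous
  -- derivative facts for u
  have hud : Differentiable ℝ u := hu.differentiable one_ne_zero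
  have hpdc : ∀ i, Continuous (pd n u i) :=
    fun i => (hu.continuous_fderiv one_ne_zero).clm_apply continuous_const
  have hpd0 : ∀ x ∉ tsupport u, ∀ i, pd n u i x = 0 := by
    intro x hx i
    have : fderiv ℝ u x = 0 := by
      by_contra h
      exact hx (support_fderiv_subset ℝ (by simpa [Function.mem_support] using h))
    simp [pd, this]
  have hu0 : ∀ x ∉ tsupport u, u x = 0 := fun x hx => image_eq_zero_of_notMem_tsupport hx
  -- trivial case: empty support
  by_cases hKe : tsupport u = ∅
  · have h1 : (fun x : EuclideanSpace ℝ (Fin n) =>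
        Real.exp (-2 * s / x k) * (x k) ^ (2 * t) * gradSq n u x) = fun _ => 0 := by
      funext x
      have : ∀ i, pd n u i x = 0 := hpd0 x (by simp [hKe])
      simp [gradSq, this]
    have h2 : (fun x : EuclideanSpace ℝ (Fin n) =>
        Real.exp (-2 * s / x k) * (x k) ^ (2 * t - 4) * (u x) ^ 2) = fun _ => 0 := by
      funext x
      simp [hu0 x (by simp [hKe])]
    rw [ge_iff_le, h1, h2]
    simp
  -- main case
  have hne : (tsupport u).Nonempty := Set.nonempty_iff_ne_empty.2 hKe
  obtain ⟨z, hzK, hzmin⟩ := hcs.exists_isMinOn hne hprojc.continuousOn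
  set δ : ℝ := z k with hδdef
  have hδ : 0 < δ := (hsupp hzK).1
  have hKlb : ∀ x ∈ tsupport u, δ ≤ x k := fun x hx => hzmin hx
  have hKub : ∀ x ∈ tsupport u, x k < ε / (c + 1) := fun x hx => (hsupp hx).2
  -- the cutoff and weight functions on ℝ
  set χ : ℝ → ℝ := fun y => Real.smoothTransition (4*y/δ - 2) with hχdef
  set G : ℝ → ℝ := fun y => s * (Real.exp (-2*s/y) * y ^ (2*t - 2)) with hGdef
  set φ : ℝ → ℝ := fun y => χ y * G y with hφdef
  set Dfun : ℝ → ℝ :=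
    fun y => Real.exp (-2*s/y) * (2*s^2 * y^(2*t-4) + s*(2*t-2) * y^(2*t-3)) with hDdef
  have hχ1 : ∀ y : ℝ, δ * (3/4) ≤ y → χ y = 1 := by
    intro y hy
    apply Real.smoothTransition.one_of_one_le
    rw [le_sub_iff_add_le, le_div_iff₀ hδ]; linarith
  have hχ0 : ∀ y : ℝ, y < δ/2 → χ y = 0 := by
    intro y hy
    apply Real.smoothTransition.zero_of_nonpos
    rw [sub_nonpos, div_le_iff₀ hδ]; linarith
  have hχdiff : Differentiable ℝ χ := by
    have h1 : Differentiable ℝ fun y : ℝ => 4*y/δ - 2 := by fun_prop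
    exact fun y => DifferentiableAt.comp y
      (((Real.smoothTransition.contDiff (n := 1)).differentiable one_ne_zero).differentiableAt)
      (h1 y)
  -- derivative of the exponential factor
  have hexp : ∀ y : ℝ, y ≠ 0 → HasDerivAt (fun y : ℝ => Real.exp (-2*s/y))
      (Real.exp (-2*s/y) * (2*s/y^2)) y := by
    intro y hy
    have h := (hasDerivAt_inv hy).const_mul (-2*s)
    have e : (fun y : ℝ => -2*s/y) = fun y : ℝ => -2*s*y⁻¹ := by
      funext z; rw [div_eq_mul_inv]
    have h1 : HasDerivAt (fun y : ℝ => -2*s/y) (2*s/y^2) y := by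
      rw [e, show 2*s/y^2 = -2*s * -(y^2)⁻¹ by field_simp]
      exact h
    exact h1.exp
  -- derivative of G
  have hGD : ∀ y : ℝ, 0 < y → HasDerivAt G (Dfun y) y := by
    intro y hy
    have hrpow : HasDerivAt (fun y : ℝ => y ^ (2*t-2)) ((2*t-2) * y^(2*t-3)) y := by
      have := Real.hasDerivAt_rpow_const (x := y) (p := 2*t-2) (Or.inl hy.ne')
      convert this using 2
      ring
    have h := ((hexp y hy.ne').mul hrpow).const_mul s
    have e2 : y ^ (2*t-2) = y^2 * y^(2*t-4) := by
      rw [← Real.rpow_natCast y 2, ← Real.rpow_add hy]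
      congr 1
      push_cast; ring
    refine h.congr_deriv ?_
    rw [hDdef]
    field_simp
    rw [show 2*(t-1) = 2*t-2 by ring, e2]
    ring
  -- φ agrees with G above 3δ/4
  have hφG : ∀ y : ℝ, δ * (3/4) < y → φ y = G y := by
    intro y hy
    rw [hφdef]; simp only
    rw [hχ1 y hy.le, one_mul]
  have hφD : ∀ y : ℝ, δ ≤ y → HasDerivAt φ (Dfun y) y := by
    intro y hy
    have h0 : 0 < y := lt_of_lt_of_le hδ hy
    have hev : φ =ᶠ[nhds y] G := by
      filter_upwards [Ioi_mem_nhds (show δ * (3/4) < y by linarith)] with z hz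
      exact hφG z hz
    exact (hGD y h0).congr_of_eventuallyEq hev
  have hφdiff : Differentiable ℝ φ := by
    intro y
    by_cases hy : y < δ/2
    · have hev : (fun _ : ℝ => (0:ℝ)) =ᶠ[nhds y] φ := by
        filter_upwards [Iio_mem_nhds hy] with z hz
        rw [hφdef]; simp only
        rw [hχ0 z hz, zero_mul]
      exact (differentiableAt_const 0).congr_of_eventuallyEq hev.symm
    · push_neg at hy
      have h0 : 0 < y := lt_of_lt_of_le (by linarith) hy
      exact (hχdiff y).mul (hGD y h0).differentiableAt
  have hφc : Continuous φ := hφdiff.continuous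
  have hφderiv : ∀ y : ℝ, δ ≤ y → deriv φ y = Dfun y := fun y hy => (hφD y hy).deriv
  -- continuous versions of the weights
  set M : EuclideanSpace ℝ (Fin n) → ℝ := fun x => max (x k) (δ/2) with hMdef
  have hMc : Continuous M := hprojc.max continuous_const
  have hMpos : ∀ x, 0 < M x := fun x => lt_of_lt_of_le (by linarith) (le_max_right _ _)
  have hMK : ∀ x ∈ tsupport u, M x = x k := by
    intro x hx
    exact max_eq_left (by linarith [hKlb x hx])
  have hrpowc : ∀ cc : ℝ, Continuous fun x => (M x) ^ cc := by
    intro cc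
    rw [continuous_iff_continuousAt]
    exact fun x => (Real.continuousAt_rpow_const _ _ (Or.inl (hMpos x).ne')).comp
      hMc.continuousAt
  have hexpc : Continuous fun x => Real.exp (-2*s/M x) :=
    Real.continuous_exp.comp (continuous_const.div hMc fun x => (hMpos x).ne')
  set W : EuclideanSpace ℝ (Fin n) → ℝ :=
    fun x => Real.exp (-2*s/M x) * (M x) ^ (2*t) with hWdef
  set V : EuclideanSpace ℝ (Fin n) → ℝ :=
    fun x => Real.exp (-2*s/M x) * (M x) ^ (2*t-4) with hVdef
  have hWc : Continuous W := hexpc.mul (hrpowc _)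
  have hVc : Continuous V := hexpc.mul (hrpowc _)
  have hWpos : ∀ x, 0 ≤ W x :=
    fun x => mul_nonneg (Real.exp_pos _).le (Real.rpow_nonneg (hMpos x).le _)
  -- integrability helper
  have hint : ∀ F : EuclideanSpace ℝ (Fin n) → ℝ, Continuous F →
      (∀ x ∉ tsupport u, F x = 0) → Integrable F (volume) := by
    intro F hFc hF0
    exact hFc.integrable_of_hasCompactSupport (HasCompactSupport.intro hcs hF0)
  -- rewrite the two integrands of the goal
  have hg1 : (fun x : EuclideanSpace ℝ (Fin n) =>
      Real.exp (-2 * s / x k) * (x k) ^ (2 * t) * gradSq n u x)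
      = fun x => W x * gradSq n u x := by
    funext x
    by_cases hx : x ∈ tsupport u
    · rw [hWdef]; simp only [hMK x hx]
    · have : gradSq n u x = 0 := by simp [gradSq, hpd0 x hx]
      rw [this, mul_zero, mul_zero]
  have hg2 : (fun x : EuclideanSpace ℝ (Fin n) =>
      Real.exp (-2 * s / x k) * (x k) ^ (2 * t - 4) * (u x) ^ 2)
      = fun x => V x * (u x) ^ 2 := by
    funext x
    by_cases hx : x ∈ tsupport u
    · rw [hVdef]; simp only [hMK x hx]
    · rw [hu0 x hx]
      ring
  -- integration by parts
  set v : EuclideanSpace ℝ (Fin n) := EuclideanSpace.single k (1:ℝ) with hvdef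
  set Φ : EuclideanSpace ℝ (Fin n) → ℝ := fun x => φ (x k) with hΦdef
  set g : EuclideanSpace ℝ (Fin n) → ℝ := fun x => u x * u x with hgdef
  have hΦfd : ∀ x, HasFDerivAt Φ
      (deriv φ (x k) • (EuclideanSpace.proj k : EuclideanSpace ℝ (Fin n) →L[ℝ] ℝ)) x := by
    intro x
    have h2 : HasFDerivAt (fun x : EuclideanSpace ℝ (Fin n) => x k)
        (EuclideanSpace.proj (𝕜 := ℝ) k) x := by
      have := (EuclideanSpace.proj (𝕜 := ℝ) k).hasFDerivAt (x := x)
      rwa [show ⇑(EuclideanSpace.proj (𝕜 := ℝ) k)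
          = fun x : EuclideanSpace ℝ (Fin n) => x k from rfl] at this
    exact ((hφdiff (x k)).hasDerivAt).comp_hasFDerivAt x h2
  have hΦdiff : Differentiable ℝ Φ := fun x => (hΦfd x).differentiableAt
  have hΦ' : ∀ x, fderiv ℝ Φ x v = deriv φ (x k) := by
    intro x
    rw [(hΦfd x).fderiv]
    simp [hvdef]
  have hgdiff : Differentiable ℝ g := hud.mul hud
  have hg' : ∀ x, fderiv ℝ g x v = 2 * u x * pd n u k x := by
    intro x
    rw [hgdef]
    rw [fderiv_fun_mul (hud x) (hud x)]
    simp only [ContinuousLinearMap.add_apply, ContinuousLinearMap.smul_apply, smul_eq_mul]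
    simp only [pd, hvdef]
    ring
  have e1 : (fun x => 2 * φ (x k) * u x * pd n u k x)
      = fun x => Φ x * fderiv ℝ g x v := by
    funext x
    rw [hg' x, hΦdef]
    ring
  have e2 : (fun x => deriv φ (x k) * (u x) ^ 2)
      = fun x => fderiv ℝ Φ x v * g x := by
    funext x
    rw [hΦ' x, hgdef]
    ring
  have e3 : (fun x => deriv φ (x k) * (u x) ^ 2)
      = fun x => Dfun (M x) * (u x) ^ 2 := by
    funext x
    by_cases hx : x ∈ tsupport u
    · rw [hMK x hx, hφderiv _ (hKlb x hx)]
    · rw [hu0 x hx]; ring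
  have hDMc : Continuous fun x => Dfun (M x) := by
    rw [hDdef]
    exact hexpc.mul ((continuous_const.mul (hrpowc _)).add (continuous_const.mul (hrpowc _)))
  have ia : Integrable (fun x => 2 * φ (x k) * u x * pd n u k x) volume := by
    apply hint
    · exact ((continuous_const.mul (hφc.comp hprojc)).mul hu.continuous).mul (hpdc k)
    · intro x hx; rw [hu0 x hx]; ring
  have ib : Integrable (fun x => deriv φ (x k) * (u x) ^ 2) volume := by
    rw [e3]
    apply hint
    · exact hDMc.mul (hu.continuous.pow 2)
    · intro x hx; rw [hu0 x hx]; ring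
  have hibp : ∫ x, (2 * φ (x k) * u x * pd n u k x + deriv φ (x k) * (u x) ^ 2) = 0 := by
    have hfg' : Integrable (fun x => Φ x * fderiv ℝ g x v) volume := e1 ▸ ia
    have hf'g : Integrable (fun x => fderiv ℝ Φ x v * g x) volume := e2 ▸ ib
    have hfg : Integrable (fun x => Φ x * g x) volume := by
      apply hint
      · exact (hφc.comp hprojc).mul (hu.continuous.mul hu.continuous)
      · intro x hx; rw [hgdef]; simp only; rw [hu0 x hx]; ring
    have h := integral_mul_fderiv_eq_neg_fderiv_mul_of_integrable hf'g hfg' hfg (fun x _ => hΦdiff x) (fun x _ => hgdiff x)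
    rw [integral_add ia ib, e1, e2, h]
    ring
  -- pointwise inequality
  have hpt : ∀ x, (s^2 - ε) * (V x * (u x)^2) ≤
      W x * (pd n u k x)^2 +
        (2 * φ (x k) * u x * pd n u k x + deriv φ (x k) * (u x) ^ 2) := by
    intro x
    by_cases hx : x ∈ tsupport u
    · set y : ℝ := x k with hy
      have hδy : δ ≤ y := hKlb x hx
      have hy0 : 0 < y := lt_of_lt_of_le hδ hδy
      have hyub : y < ε / (c + 1) := hKub x hx
      have habs : -ε ≤ s * (2*t-2) * y := by
        have h1 : y * (c + 1) < ε := (lt_div_iff₀ (by positivity)).1 hyub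
        have h2 : |s * (2*t-2) * y| = c * y := by
          rw [abs_mul, abs_of_pos hy0, hc]
        have h3 : -(c * y) ≤ s * (2*t-2) * y := by
          rw [← h2]; exact neg_abs_le _
        nlinarith
      rw [hφG y (by linarith), hφderiv y hδy]
      simp only [hWdef, hVdef, hGdef, hDdef, hMK x hx]
      rw [← hy]
      set E : ℝ := Real.exp (-2*s/y) with hE
      have hEpos : 0 < E := Real.exp_pos _
      set a : ℝ := y ^ t with ha
      set b : ℝ := y ^ (t-2) with hb
      have A1 : y ^ (2*t) = a * a := by
        rw [ha, show 2*t = t + t by ring, Real.rpow_add hy0]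
      have A2 : y ^ (2*t-4) = b * b := by
        rw [hb, show 2*t-4 = (t-2) + (t-2) by ring, Real.rpow_add hy0]
      have A3 : y ^ (2*t-2) = a * b := by
        rw [ha, hb, show 2*t-2 = t + (t-2) by ring, Real.rpow_add hy0]
      have A4 : y ^ (2*t-3) = y * (b * b) := by
        rw [← A2, show (2*t-3) = 1 + (2*t-4) by ring, Real.rpow_add hy0, Real.rpow_one]
      rw [A1, A2, A3, A4]
      nlinarith [mul_nonneg hEpos.le (sq_nonneg (a * pd n u k x + s * b * u x)),
        mul_nonneg (mul_nonneg (show (0:ℝ) ≤ s * (2*t-2) * y + ε by linarith) hEpos.le)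
          (mul_nonneg (mul_self_nonneg b) (mul_self_nonneg (u x)))]
    · rw [hu0 x hx, hpd0 x hx k]
      ring_nf
      nlinarith [hWpos x]
  -- integrability of the remaining integrands
  have iW2 : Integrable (fun x => W x * (pd n u k x)^2) volume := by
    apply hint
    · exact hWc.mul ((hpdc k).pow 2)
    · intro x hx; rw [hpd0 x hx k]; ring
  have iWg : Integrable (fun x => W x * gradSq n u x) volume := by
    apply hint
    · exact hWc.mul (continuous_finset_sum _ fun i _ => (hpdc i).pow 2)
    · intro x hx
      have : gradSq n u x = 0 := by simp [gradSq, hpd0 x hx]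
      rw [this, mul_zero]
  have iV : Integrable (fun x => (s^2 - ε) * (V x * (u x)^2)) volume := by
    apply hint
    · exact continuous_const.mul (hVc.mul (hu.continuous.pow 2))
    · intro x hx; rw [hu0 x hx]; ring
  -- main chain
  rw [ge_iff_le, hg1, hg2, ← integral_const_mul]
  calc ∫ x, (s^2 - ε) * (V x * (u x)^2)
      ≤ ∫ x, (W x * (pd n u k x)^2 +
          (2 * φ (x k) * u x * pd n u k x + deriv φ (x k) * (u x) ^ 2)) :=
        integral_mono iV (iW2.add (ia.add ib)) hpt
    _ = (∫ x, W x * (pd n u k x)^2) +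
          ∫ x, (2 * φ (x k) * u x * pd n u k x + deriv φ (x k) * (u x) ^ 2) :=
        integral_add iW2 (ia.add ib)
    _ = ∫ x, W x * (pd n u k x)^2 := by rw [hibp, add_zero]
    _ ≤ ∫ x, W x * gradSq n u x := by
        apply integral_mono iW2 iWg
        intro x
        apply mul_le_mul_of_nonneg_left _ (hWpos x)
        exact Finset.single_le_sum (f := fun i => (pd n u i x)^2)
          (fun i _ => sq_nonneg _) (Finset.mem_univ k)
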